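/- For H ∈ (1/2, 1) and 0 < s < t, the difference R^X(t,t) − 2R^X(t,s) + R^X(s,s), where R^X(t,s) = H∫₀^{s∧t}((s∧t)−a)^{2H−1}(((s∨t)+a)^{−1/2}+((s∨t)−a)^{−1/2})da, satisfies R^X(t,t) − 2R^X(t,s) + R^X(s,s) ≤ C·(t−s)^{1/2} for a constant C depending only on H and an upper bound T on t. -/

import Mathlib

open MeasureTheory

noncomputable def RX (H t s : ℝ) : ℝ :=
  H * ∫ a in (0:ℝ)..(min s t),
    (min s t - a) ^ (2*H - 1) * ((max s t + a) ^ (-(1:ℝ)/2) + (max s t - a) ^ (-(1:ℝ)/2))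

open intervalIntegral Set Real

lemma integ_shift (u x q : ℝ) (hq : -1 < q) :
    ∫ a in u..x, (x - a) ^ q = (x - u) ^ (q + 1) / (q + 1) := by
  rw [intervalIntegral.integral_comp_sub_left (fun b => b ^ q) x]
  rw [integral_rpow (Or.inl hq), sub_self, Real.zero_rpow (by linarith)]
  ring

lemma integrable_shift (u x q : ℝ) (hq : -1 < q) :
    IntervalIntegrable (fun a => (x - a) ^ q) volume u x := by
  have := (intervalIntegral.intervalIntegrable_rpow' (a := x - u) (b := x - x) hq).comp_sub_left x
  simpa using this

-- monotonicity on open interval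
lemma my_mono {f g : ℝ → ℝ} {a b : ℝ} (hab : a ≤ b) (hf : IntervalIntegrable f volume a b)
    (hg : IntervalIntegrable g volume a b) (h : ∀ x ∈ Set.Ioo a b, f x ≤ g x) :
    ∫ x in a..b, f x ≤ ∫ x in a..b, g x := by
  refine intervalIntegral.integral_mono_ae_restrict hab hf hg ?_
  have ha : ∀ᵐ x : ℝ, x ≠ a := by
    rw [MeasureTheory.ae_iff]
    simpa using Real.volume_singleton
  have hb : ∀ᵐ x : ℝ, x ≠ b := by
    rw [MeasureTheory.ae_iff]
    simpa using Real.volume_singleton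
  have hmem : ∀ᵐ x ∂(volume.restrict (Set.Icc a b)), x ∈ Set.Icc a b :=
    ae_restrict_mem measurableSet_Icc
  have ha' : ∀ᵐ x ∂(volume.restrict (Set.Icc a b)), x ≠ a ∧ x ≠ b := (ha.and hb).filter_mono (MeasureTheory.ae_mono Measure.restrict_le_self)
  filter_upwards [hmem, ha'] with x hx hne
  exact h x ⟨lt_of_le_of_ne hx.1 (Ne.symm hne.1), lt_of_le_of_ne hx.2 hne.2⟩

-- Bernoulli-type inequality
lemma bern {x y p : ℝ} (hy : 0 < y) (hxy : y ≤ x) (hp0 : 0 ≤ p) (hp1 : p ≤ 1) :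
    x ^ p - y ^ p ≤ p * (x - y) * y ^ (p - 1) := by
  have hx : 0 < x := lt_of_lt_of_le hy hxy
  have hz : (0:ℝ) ≤ (x - y) / y := div_nonneg (by linarith) hy.le
  have key : (1 + (x - y) / y) ^ p ≤ 1 + p * ((x - y) / y) :=
    rpow_one_add_le_one_add_mul_self (by linarith) hp0 hp1
  have hxe : x = y * (1 + (x - y) / y) := by field_simp; ring
  have h1 : x ^ p = y ^ p * (1 + (x - y) / y) ^ p := by
    rw [← Real.mul_rpow hy.le (by linarith), ← hxe]
  have h2 : y ^ p * (1 + (x - y) / y) ^ p ≤ y ^ p * (1 + p * ((x - y) / y)) := by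
    apply mul_le_mul_of_nonneg_left key (Real.rpow_nonneg hy.le p)
  have h3 : y ^ (p - 1) = y ^ p / y := by
    rw [Real.rpow_sub hy, Real.rpow_one]
  rw [h1, h3]
  calc y ^ p * (1 + (x - y) / y) ^ p - y ^ p ≤ y ^ p * (1 + p * ((x - y) / y)) - y ^ p := by
        linarith
    _ = p * (x - y) * (y ^ p / y) := by field_simp; ring

-- sqrt difference inequality
lemma sq_diff {x y : ℝ} (hx : 0 < x) (hxy : x ≤ y) :
    x ^ (-(1:ℝ)/2) - y ^ (-(1:ℝ)/2) ≤ (y - x) ^ ((1:ℝ)/2) * x⁻¹ := by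
  have hy : 0 < y := lt_of_lt_of_le hx hxy
  have hsx : 0 < Real.sqrt x := Real.sqrt_pos.2 hx
  have hsy : 0 < Real.sqrt y := Real.sqrt_pos.2 hy
  have hxx : Real.sqrt x * Real.sqrt x = x := Real.mul_self_sqrt hx.le
  have hyy : Real.sqrt y * Real.sqrt y = y := Real.mul_self_sqrt hy.le
  have hdd : Real.sqrt (y - x) * Real.sqrt (y - x) = y - x :=
    Real.mul_self_sqrt (by linarith)
  have key : Real.sqrt y - Real.sqrt x ≤ Real.sqrt (y - x) := by
    have h1 : y ≤ (Real.sqrt (y - x) + Real.sqrt x) ^ 2 := by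
      nlinarith [Real.sqrt_nonneg (y - x), Real.sqrt_nonneg x]
    have h2 : Real.sqrt y ≤ Real.sqrt (y - x) + Real.sqrt x := by
      calc Real.sqrt y ≤ Real.sqrt ((Real.sqrt (y - x) + Real.sqrt x) ^ 2) :=
            Real.sqrt_le_sqrt h1
        _ = Real.sqrt (y - x) + Real.sqrt x := Real.sqrt_sq (by positivity)
    linarith
  have ex : x ^ (-(1:ℝ)/2) = (Real.sqrt x)⁻¹ := by
    rw [show (-(1:ℝ)/2) = -(1/2) by ring, Real.rpow_neg hx.le, ← Real.sqrt_eq_rpow]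
  have ey : y ^ (-(1:ℝ)/2) = (Real.sqrt y)⁻¹ := by
    rw [show (-(1:ℝ)/2) = -(1/2) by ring, Real.rpow_neg hy.le, ← Real.sqrt_eq_rpow]
  have ed : (y - x) ^ ((1:ℝ)/2) = Real.sqrt (y - x) := by
    rw [Real.sqrt_eq_rpow]
  rw [ex, ey, ed]
  have e1 : (Real.sqrt x)⁻¹ - (Real.sqrt y)⁻¹ = (Real.sqrt y - Real.sqrt x) / (Real.sqrt x * Real.sqrt y) := by
    field_simp
  rw [e1]
  have hle : x ≤ Real.sqrt x * Real.sqrt y := by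
    nlinarith [Real.sqrt_le_sqrt hxy]
  calc (Real.sqrt y - Real.sqrt x) / (Real.sqrt x * Real.sqrt y)
      ≤ Real.sqrt (y - x) / (Real.sqrt x * Real.sqrt y) :=
        (div_le_div_iff_of_pos_right (by positivity)).2 key
    _ ≤ Real.sqrt (y - x) * x⁻¹ := by
        rw [div_eq_mul_inv]
        exact mul_le_mul_of_nonneg_left (inv_anti₀ hx hle) (Real.sqrt_nonneg _)

noncomputable def Kf (M a : ℝ) : ℝ := (M + a) ^ (-(1:ℝ)/2) + (M - a) ^ (-(1:ℝ)/2)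



lemma integrable_main {p m M : ℝ} (hp : 0 < p) (hm : 0 < m) (hmM : m ≤ M) :
    IntervalIntegrable (fun a => (m - a) ^ p * Kf M a) volume 0 m := by
  have hM : 0 < M := lt_of_lt_of_le hm hmM
  have hcont1 : Continuous fun a : ℝ => (m - a) ^ p :=
    (continuous_const.sub continuous_id).rpow_const (fun a => Or.inr hp.le)
  have h1 : IntervalIntegrable (fun a => (m - a) ^ p * (M + a) ^ (-(1:ℝ)/2)) volume 0 m := by
    apply ContinuousOn.intervalIntegrable
    apply ContinuousOn.mul hcont1.continuousOn
    apply ContinuousOn.rpow_const (continuous_const.add continuous_id).continuousOn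
    intro x hx
    left
    rw [Set.uIcc_of_le hm.le] at hx
    have h0 : (0:ℝ) ≤ x := hx.1
    have : 0 < M + x := by linarith
    exact ne_of_gt this
  have h2 : IntervalIntegrable (fun a => (m - a) ^ p * (M - a) ^ (-(1:ℝ)/2)) volume 0 m := by
    have f2int : IntervalIntegrable (fun a => (M - a) ^ (-(1:ℝ)/2)) volume 0 m := by
      rcases eq_or_lt_of_le hmM with h | h
      · subst h
        exact integrable_shift 0 m (-(1:ℝ)/2) (by norm_num)
      · apply ContinuousOn.intervalIntegrable
        apply ContinuousOn.rpow_const (continuous_const.sub continuous_id).continuousOn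
        intro x hx
        left
        rw [Set.uIcc_of_le hm.le] at hx
        have : x ≤ m := hx.2
        have : 0 < M - x := by linarith
        exact ne_of_gt this
    exact f2int.continuousOn_mul hcont1.continuousOn
  have := h1.add h2
  simpa [Kf, mul_add] using this

theorem stmt14 (H T : ℝ) (hH1 : 1/2 < H) (hH2 : H < 1) (hT : 0 < T) :
    ∃ C > (0:ℝ), ∀ s t : ℝ, 0 < s → s < t → t ≤ T →
      RX H t t - 2 * RX H t s + RX H s s ≤ C * (t - s) ^ ((1:ℝ)/2) := by
  set p : ℝ := 2 * H - 1 with hp_def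
  have hH0 : 0 < H := by linarith
  have hp0 : 0 < p := by rw [hp_def]; linarith
  have hp1 : p < 1 := by rw [hp_def]; linarith
  have h2p : 0 < 2 / p := div_pos (by norm_num) hp0
  have hTp : 0 < T ^ p := Real.rpow_pos_of_pos hT p
  have h6 : (0:ℝ) < 6 + 2 / p := by linarith
  refine ⟨H * T ^ p * (6 + 2 / p), mul_pos (mul_pos hH0 hTp) h6, ?_⟩
  intro s t hs hst htT
  have ht : 0 < t := hs.trans hst
  have hts : 0 < t - s := by linarith
  have hsT : s ≤ T := by linarith
  -- unfold RX
  have eA : RX H t t = H * ∫ a in (0:ℝ)..t, (t - a) ^ p * Kf t a := by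
    simp [RX, Kf, hp_def]
  have eB : RX H t s = H * ∫ a in (0:ℝ)..s, (s - a) ^ p * Kf t a := by
    simp [RX, Kf, hp_def, min_eq_left hst.le, max_eq_right hst.le]
  have eC : RX H s s = H * ∫ a in (0:ℝ)..s, (s - a) ^ p * Kf s a := by
    simp [RX, Kf, hp_def]
  -- integrability facts
  have iA : IntervalIntegrable (fun a => (t - a) ^ p * Kf t a) volume 0 t :=
    integrable_main hp0 ht le_rfl
  have hsub1 : Set.uIcc (0:ℝ) s ⊆ Set.uIcc (0:ℝ) t := by
    rw [Set.uIcc_of_le hs.le, Set.uIcc_of_le ht.le]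
    exact Set.Icc_subset_Icc le_rfl hst.le
  have hsub2 : Set.uIcc s t ⊆ Set.uIcc (0:ℝ) t := by
    rw [Set.uIcc_of_le hst.le, Set.uIcc_of_le ht.le]
    exact Set.Icc_subset_Icc hs.le le_rfl
  have iA1 : IntervalIntegrable (fun a => (t - a) ^ p * Kf t a) volume 0 s := iA.mono_set hsub1
  have iA2 : IntervalIntegrable (fun a => (t - a) ^ p * Kf t a) volume s t := iA.mono_set hsub2
  have iB : IntervalIntegrable (fun a => (s - a) ^ p * Kf t a) volume 0 s :=
    integrable_main hp0 hs hst.le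
  have iC : IntervalIntegrable (fun a => (s - a) ^ p * Kf s a) volume 0 s :=
    integrable_main hp0 hs le_rfl
  have iq : (-1:ℝ) < -(1:ℝ)/2 := by norm_num
  have iqp : (-1:ℝ) < p - 1 := by linarith
  have iD1 : IntervalIntegrable (fun a => 2 * (t-s)^p * (t - a) ^ (-(1:ℝ)/2)) volume s t :=
    (integrable_shift s t _ iq).const_mul _
  have iD2 : IntervalIntegrable (fun a => 2 * p * (t-s) ^ ((1:ℝ)/2) * (s - a) ^ (p - 1)) volume 0 s :=
    (integrable_shift 0 s _ iqp).const_mul _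
  have iD3 : IntervalIntegrable (fun a => 2 * (t-s) ^ ((1:ℝ)/2) * (s - a) ^ (p - 1)) volume 0 s :=
    (integrable_shift 0 s _ iqp).const_mul _
  -- bound 1 : tail integral
  have b1 : ∫ a in s..t, (t - a) ^ p * Kf t a ≤ 2 * (t-s)^p * (2 * (t-s) ^ ((1:ℝ)/2)) := by
    have step : ∫ a in s..t, (t - a) ^ p * Kf t a
        ≤ ∫ a in s..t, 2 * (t-s)^p * (t - a) ^ (-(1:ℝ)/2) := by
      apply my_mono hst.le iA2 iD1
      intro a ha
      have h1 : 0 < t - a := by linarith [ha.2]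
      have h3 : 0 < t + a := by linarith [ha.1]
      have e1 : (t + a) ^ (-(1:ℝ)/2) ≤ (t - a) ^ (-(1:ℝ)/2) :=
        Real.rpow_le_rpow_of_nonpos h1 (by linarith [ha.1]) (by norm_num)
      have e2 : (t - a) ^ p ≤ (t - s) ^ p :=
        Real.rpow_le_rpow h1.le (by linarith [ha.1]) hp0.le
      have e3 : Kf t a ≤ 2 * (t - a) ^ (-(1:ℝ)/2) := by
        simp only [Kf]; linarith
      have hK0 : 0 ≤ Kf t a :=
        add_nonneg (Real.rpow_nonneg h3.le _) (Real.rpow_nonneg h1.le _)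
      calc (t - a) ^ p * Kf t a ≤ (t - s) ^ p * (2 * (t - a) ^ (-(1:ℝ)/2)) :=
            mul_le_mul e2 e3 hK0 (Real.rpow_nonneg hts.le _)
        _ = 2 * (t-s)^p * (t - a) ^ (-(1:ℝ)/2) := by ring
    have v1 : ∫ a in s..t, 2 * (t-s)^p * (t - a) ^ (-(1:ℝ)/2)
        = 2 * (t-s)^p * (2 * (t-s) ^ ((1:ℝ)/2)) := by
      rw [intervalIntegral.integral_const_mul, integ_shift s t _ iq,
        show (-(1:ℝ)/2 + 1) = (1:ℝ)/2 by norm_num]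
      ring
    rw [v1] at step
    exact step
  -- bound 2
  have b2 : (∫ a in (0:ℝ)..s, (t - a) ^ p * Kf t a) - (∫ a in (0:ℝ)..s, (s - a) ^ p * Kf t a)
      ≤ 2 * p * (t-s) ^ ((1:ℝ)/2) * (s ^ p / p) := by
    rw [← intervalIntegral.integral_sub iA1 iB]
    have step : ∫ a in (0:ℝ)..s, ((t - a) ^ p * Kf t a - (s - a) ^ p * Kf t a)
        ≤ ∫ a in (0:ℝ)..s, 2 * p * (t-s) ^ ((1:ℝ)/2) * (s - a) ^ (p - 1) := by
      apply my_mono hs.le (iA1.sub iB) iD2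
      intro a ha
      obtain ⟨ha0, has⟩ := ha
      have hy : 0 < s - a := by linarith
      have hx : s - a ≤ t - a := by linarith
      have d1 : (t - a) ^ p - (s - a) ^ p ≤ p * (t - s) * (s - a) ^ (p - 1) := by
        have := bern hy hx hp0.le hp1.le
        simpa [show t - a - (s - a) = t - s by ring] using this
      have hK0 : 0 ≤ Kf t a :=
        add_nonneg (Real.rpow_nonneg (by linarith) _) (Real.rpow_nonneg (by linarith) _)
      have e1 : (t + a) ^ (-(1:ℝ)/2) ≤ (t - s) ^ (-(1:ℝ)/2) :=
        Real.rpow_le_rpow_of_nonpos hts (by linarith) (by norm_num)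
      have e2 : (t - a) ^ (-(1:ℝ)/2) ≤ (t - s) ^ (-(1:ℝ)/2) :=
        Real.rpow_le_rpow_of_nonpos hts (by linarith) (by norm_num)
      have e3 : Kf t a ≤ 2 * (t - s) ^ (-(1:ℝ)/2) := by
        simp only [Kf]; linarith
      have hd1nn : 0 ≤ p * (t - s) * (s - a) ^ (p - 1) := by
        have := Real.rpow_nonneg hy.le (p - 1)
        positivity
      have key : (t - a) ^ p * Kf t a - (s - a) ^ p * Kf t a
          ≤ (p * (t - s) * (s - a) ^ (p - 1)) * (2 * (t - s) ^ (-(1:ℝ)/2)) := by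
        have heq : (t - a) ^ p * Kf t a - (s - a) ^ p * Kf t a
            = ((t - a) ^ p - (s - a) ^ p) * Kf t a := by ring
        rw [heq]
        exact mul_le_mul d1 e3 hK0 hd1nn
      refine key.trans (le_of_eq ?_)
      have ee : (t - s) * (t - s) ^ (-(1:ℝ)/2) = (t - s) ^ ((1:ℝ)/2) := by
        rw [show (t-s) * (t-s) ^ (-(1:ℝ)/2) = (t-s) ^ ((1:ℝ)) * (t-s) ^ (-(1:ℝ)/2) by
            rw [Real.rpow_one],
          ← Real.rpow_add hts]
        norm_num
      calc (p * (t - s) * (s - a) ^ (p - 1)) * (2 * (t - s) ^ (-(1:ℝ)/2))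
          = 2 * p * ((t - s) * (t - s) ^ (-(1:ℝ)/2)) * (s - a) ^ (p - 1) := by ring
        _ = 2 * p * (t-s) ^ ((1:ℝ)/2) * (s - a) ^ (p - 1) := by rw [ee]
    have v2 : ∫ a in (0:ℝ)..s, 2 * p * (t-s) ^ ((1:ℝ)/2) * (s - a) ^ (p - 1)
        = 2 * p * (t-s) ^ ((1:ℝ)/2) * (s ^ p / p) := by
      rw [intervalIntegral.integral_const_mul, integ_shift 0 s _ iqp,
        show p - 1 + 1 = p by ring]
      norm_num
    rw [v2] at step
    exact step
  -- bound 3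
  have b3 : (∫ a in (0:ℝ)..s, (s - a) ^ p * Kf s a) - (∫ a in (0:ℝ)..s, (s - a) ^ p * Kf t a)
      ≤ 2 * (t-s) ^ ((1:ℝ)/2) * (s ^ p / p) := by
    rw [← intervalIntegral.integral_sub iC iB]
    have step : ∫ a in (0:ℝ)..s, ((s - a) ^ p * Kf s a - (s - a) ^ p * Kf t a)
        ≤ ∫ a in (0:ℝ)..s, 2 * (t-s) ^ ((1:ℝ)/2) * (s - a) ^ (p - 1) := by
      apply my_mono hs.le (iC.sub iB) iD3
      intro a ha
      obtain ⟨ha0, has⟩ := ha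
      have hy : 0 < s - a := by linarith
      have hya : 0 < s + a := by linarith
      have d1 : (s + a) ^ (-(1:ℝ)/2) - (t + a) ^ (-(1:ℝ)/2) ≤ (t-s) ^ ((1:ℝ)/2) * (s + a)⁻¹ := by
        have := sq_diff hya (show s + a ≤ t + a by linarith)
        simpa [show t + a - (s + a) = t - s by ring] using this
      have d2 : (s - a) ^ (-(1:ℝ)/2) - (t - a) ^ (-(1:ℝ)/2) ≤ (t-s) ^ ((1:ℝ)/2) * (s - a)⁻¹ := by
        have := sq_diff hy (show s - a ≤ t - a by linarith)
        simpa [show t - a - (s - a) = t - s by ring] using this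
      have d3 : (s + a)⁻¹ ≤ (s - a)⁻¹ := by
        apply inv_anti₀ hy (by linarith)
      have hhalf : 0 ≤ (t-s) ^ ((1:ℝ)/2) := Real.rpow_nonneg hts.le _
      have d4 : (t-s) ^ ((1:ℝ)/2) * (s + a)⁻¹ ≤ (t-s) ^ ((1:ℝ)/2) * (s - a)⁻¹ :=
        mul_le_mul_of_nonneg_left d3 hhalf
      have hKK : Kf s a - Kf t a ≤ 2 * ((t-s) ^ ((1:ℝ)/2) * (s - a)⁻¹) := by
        simp only [Kf]; linarith
      have key : (s - a) ^ p * Kf s a - (s - a) ^ p * Kf t a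
          ≤ (s - a) ^ p * (2 * ((t-s) ^ ((1:ℝ)/2) * (s - a)⁻¹)) := by
        have heq : (s - a) ^ p * Kf s a - (s - a) ^ p * Kf t a
            = (s - a) ^ p * (Kf s a - Kf t a) := by ring
        rw [heq]
        exact mul_le_mul_of_nonneg_left hKK (Real.rpow_nonneg hy.le _)
      refine key.trans (le_of_eq ?_)
      have ee : (s - a) ^ p * (s - a)⁻¹ = (s - a) ^ (p - 1) := by
        rw [← Real.rpow_neg_one (s - a), ← Real.rpow_add hy, show p + (-1:ℝ) = p - 1 by ring]
      calc (s - a) ^ p * (2 * ((t-s) ^ ((1:ℝ)/2) * (s - a)⁻¹))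
          = 2 * (t-s) ^ ((1:ℝ)/2) * ((s - a) ^ p * (s - a)⁻¹) := by ring
        _ = 2 * (t-s) ^ ((1:ℝ)/2) * (s - a) ^ (p - 1) := by rw [ee]
    have v3 : ∫ a in (0:ℝ)..s, 2 * (t-s) ^ ((1:ℝ)/2) * (s - a) ^ (p - 1)
        = 2 * (t-s) ^ ((1:ℝ)/2) * (s ^ p / p) := by
      rw [intervalIntegral.integral_const_mul, integ_shift 0 s _ iqp,
        show p - 1 + 1 = p by ring]
      norm_num
    rw [v3] at step
    exact step
  -- assemble
  have hsplit : (∫ a in (0:ℝ)..t, (t - a) ^ p * Kf t a)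
      = (∫ a in (0:ℝ)..s, (t - a) ^ p * Kf t a) + ∫ a in s..t, (t - a) ^ p * Kf t a :=
    (intervalIntegral.integral_add_adjacent_intervals iA1 iA2).symm
  rw [eA, eB, eC, hsplit]
  have hsp : s ^ p ≤ T ^ p := Real.rpow_le_rpow hs.le hsT hp0.le
  have htsp : (t-s) ^ p ≤ T ^ p := Real.rpow_le_rpow hts.le (by linarith) hp0.le
  have hhalf : 0 ≤ (t-s) ^ ((1:ℝ)/2) := Real.rpow_nonneg hts.le _
  have lin : ((∫ a in (0:ℝ)..s, (t - a) ^ p * Kf t a) + ∫ a in s..t, (t - a) ^ p * Kf t a)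
      - 2 * (∫ a in (0:ℝ)..s, (s - a) ^ p * Kf t a) + (∫ a in (0:ℝ)..s, (s - a) ^ p * Kf s a)
      ≤ 2 * p * (t-s) ^ ((1:ℝ)/2) * (s ^ p / p) + 2 * (t-s)^p * (2 * (t-s) ^ ((1:ℝ)/2))
        + 2 * (t-s) ^ ((1:ℝ)/2) * (s ^ p / p) := by linarith
  have hcoef : 2 * p * (s ^ p / p) + 2 * (t-s)^p * 2 + 2 * (s ^ p / p) ≤ T ^ p * (6 + 2 / p) := by
    have e1 : 2 * p * (s ^ p / p) = 2 * s ^ p := by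
      field_simp
    have e2 : 2 * (s ^ p / p) = (2 / p) * s ^ p := by ring
    have e3 : (2 / p) * s ^ p ≤ (2 / p) * T ^ p := mul_le_mul_of_nonneg_left hsp h2p.le
    have e4 : T ^ p * (6 + 2 / p) = 6 * T ^ p + (2 / p) * T ^ p := by ring
    rw [e1, e2, e4]
    linarith
  calc H * ((∫ a in (0:ℝ)..s, (t - a) ^ p * Kf t a) + ∫ a in s..t, (t - a) ^ p * Kf t a)
        - 2 * (H * ∫ a in (0:ℝ)..s, (s - a) ^ p * Kf t a)
        + H * ∫ a in (0:ℝ)..s, (s - a) ^ p * Kf s a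
      = H * (((∫ a in (0:ℝ)..s, (t - a) ^ p * Kf t a) + ∫ a in s..t, (t - a) ^ p * Kf t a)
        - 2 * (∫ a in (0:ℝ)..s, (s - a) ^ p * Kf t a)
        + (∫ a in (0:ℝ)..s, (s - a) ^ p * Kf s a)) := by ring
    _ ≤ H * (2 * p * (t-s) ^ ((1:ℝ)/2) * (s ^ p / p) + 2 * (t-s)^p * (2 * (t-s) ^ ((1:ℝ)/2))
        + 2 * (t-s) ^ ((1:ℝ)/2) * (s ^ p / p)) := mul_le_mul_of_nonneg_left lin hH0.le
    _ = H * ((t-s) ^ ((1:ℝ)/2) * (2 * p * (s ^ p / p) + 2 * (t-s)^p * 2 + 2 * (s ^ p / p))) := by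
        ring
    _ ≤ H * ((t-s) ^ ((1:ℝ)/2) * (T ^ p * (6 + 2 / p))) :=
        mul_le_mul_of_nonneg_left (mul_le_mul_of_nonneg_left hcoef hhalf) hH0.le
    _ = H * T ^ p * (6 + 2 / p) * (t - s) ^ ((1:ℝ)/2) := by ring
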